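/- Let f : J → ℝ be bounded on compact subintervals of an interval J. If any two pre-primitives of f on J differ by a constant, then f is Riemann (Darboux) integrable on every compact subinterval of J. -/

import Mathlib

open Set Filter Topology

noncomputable section

/-- The set of lower Darboux sums of `f` over `[a,b]`: sums `∑ pᵢ (xᵢ₊₁ - xᵢ)` over
partitions `a = x₀ ≤ x₁ ≤ … ≤ xₙ = b` where each `pᵢ` is a lower bound of `f` on
`[xᵢ, xᵢ₊₁]`. -/
def lowerSums (f : ℝ → ℝ) (a b : ℝ) : Set ℝ :=
  {s | ∃ n : ℕ, ∃ x : ℕ → ℝ, ∃ p : ℕ → ℝ,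
    x 0 = a ∧ x n = b ∧ (∀ i < n, x i ≤ x (i + 1)) ∧
    (∀ i < n, ∀ t ∈ Set.Icc (x i) (x (i + 1)), p i ≤ f t) ∧
    s = ∑ i ∈ Finset.range n, p i * (x (i + 1) - x i)}

/-- The set of upper Darboux sums of `f` over `[a,b]`. -/
def upperSums (f : ℝ → ℝ) (a b : ℝ) : Set ℝ :=
  {s | ∃ n : ℕ, ∃ x : ℕ → ℝ, ∃ q : ℕ → ℝ,
    x 0 = a ∧ x n = b ∧ (∀ i < n, x i ≤ x (i + 1)) ∧
    (∀ i < n, ∀ t ∈ Set.Icc (x i) (x (i + 1)), f t ≤ q i) ∧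
    s = ∑ i ∈ Finset.range n, q i * (x (i + 1) - x i)}

/-- The lower Darboux integral of `f` over `[a,b]`. -/
def lowerDarboux (f : ℝ → ℝ) (a b : ℝ) : ℝ := sSup (lowerSums f a b)

/-- The upper Darboux integral of `f` over `[a,b]`. -/
def upperDarboux (f : ℝ → ℝ) (a b : ℝ) : ℝ := sInf (upperSums f a b)

/-- `f` is bounded on every compact subinterval of `J`. -/
def BoundedOnCompacts (J : Set ℝ) (f : ℝ → ℝ) : Prop :=
  ∀ a ∈ J, ∀ b ∈ J, ∃ p q : ℝ, ∀ t ∈ Set.Icc a b, p ≤ f t ∧ f t ≤ q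

/-- `F` is a pre-primitive of `f` on `J`: every difference quotient lies between
every lower bound and every upper bound of `f` on the interval with the given
endpoints. -/
def PrePrimitive (J : Set ℝ) (f F : ℝ → ℝ) : Prop :=
  ∀ x ∈ J, ∀ y ∈ J, x ≠ y → ∀ p q : ℝ,
    (∀ t ∈ Set.uIcc x y, p ≤ f t ∧ f t ≤ q) →
    p ≤ (F y - F x) / (y - x) ∧ (F y - F x) / (y - x) ≤ q

/-- `f` is Darboux (Riemann) integrable on every compact subinterval of `J`. -/
def DarbouxIntegrableOnCompacts (J : Set ℝ) (f : ℝ → ℝ) : Prop :=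
  ∀ a ∈ J, ∀ b ∈ J, a < b → lowerDarboux f a b = upperDarboux f a b

/- ### Auxiliary lemmas -/

lemma part_mono {x : ℕ → ℝ} {n : ℕ} (hx : ∀ i < n, x i ≤ x (i + 1)) :
    ∀ i j, i ≤ j → j ≤ n → x i ≤ x j := by
  intro i j hij hjn
  induction j with
  | zero => simp [Nat.le_zero.mp hij]
  | succ k ih =>
    rcases Nat.lt_or_ge i (k + 1) with h1 | h1
    · exact le_trans (ih (Nat.lt_succ_iff.mp h1) (le_trans (Nat.le_succ k) hjn)) (hx k hjn)
    · have : i = k + 1 := le_antisymm hij h1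
      simp [this]

lemma const_mem_lowerSums {f : ℝ → ℝ} {a b p : ℝ} (hab : a ≤ b)
    (hp : ∀ t ∈ Icc a b, p ≤ f t) : p * (b - a) ∈ lowerSums f a b := by
  refine ⟨1, fun i => if i = 0 then a else b, fun _ => p, rfl, rfl, ?_, ?_, ?_⟩
  · intro i hi; interval_cases i; simpa using hab
  · intro i hi; interval_cases i; simpa using hp
  · simp

lemma lowerSums_le {f : ℝ → ℝ} {a b q : ℝ} (hq : ∀ t ∈ Icc a b, f t ≤ q) :
    ∀ s ∈ lowerSums f a b, s ≤ q * (b - a) := by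
  rintro s ⟨n, x, p, h0, hn, hmono, hp, rfl⟩
  have hM := part_mono hmono
  have key : ∀ i < n, p i * (x (i + 1) - x i) ≤ q * (x (i + 1) - x i) := by
    intro i hi
    have hxi : x i ∈ Icc a b := ⟨h0 ▸ hM 0 i (Nat.zero_le _) hi.le, hn ▸ hM i n hi.le le_rfl⟩
    have h1 : p i ≤ f (x i) := hp i hi (x i) ⟨le_rfl, hmono i hi⟩
    have h2 : f (x i) ≤ q := hq _ hxi
    exact mul_le_mul_of_nonneg_right (h1.trans h2) (sub_nonneg.mpr (hmono i hi))
  calc ∑ i ∈ Finset.range n, p i * (x (i + 1) - x i)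
      ≤ ∑ i ∈ Finset.range n, q * (x (i + 1) - x i) :=
        Finset.sum_le_sum (fun i hi => key i (Finset.mem_range.mp hi))
    _ = q * (b - a) := by
        rw [← Finset.mul_sum, Finset.sum_range_sub (fun i => x i), hn, h0]

lemma lowerDarboux_bounds {f : ℝ → ℝ} {a b p q : ℝ} (hab : a ≤ b)
    (hp : ∀ t ∈ Icc a b, p ≤ f t) (hq : ∀ t ∈ Icc a b, f t ≤ q) :
    p * (b - a) ≤ lowerDarboux f a b ∧ lowerDarboux f a b ≤ q * (b - a) := by
  have hne : (lowerSums f a b).Nonempty := ⟨_, const_mem_lowerSums hab hp⟩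
  have hbdd : BddAbove (lowerSums f a b) := ⟨_, fun s hs => lowerSums_le hq s hs⟩
  exact ⟨le_csSup hbdd (const_mem_lowerSums hab hp), csSup_le hne (lowerSums_le hq)⟩

lemma lowerDarboux_self (f : ℝ → ℝ) (a : ℝ) : lowerDarboux f a a = 0 := by
  have h0 : (0 : ℝ) ∈ lowerSums f a a := by
    exact ⟨0, fun _ => a, fun _ => 0, rfl, rfl, by omega, by omega, by simp⟩
  have hub : ∀ s ∈ lowerSums f a a, s ≤ 0 := by
    have := lowerSums_le (f := f) (a := a) (b := a) (q := f a)
      (by rintro t ⟨h1, h2⟩; rw [le_antisymm h2 h1])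
    simpa using this
  exact le_antisymm (csSup_le ⟨_, h0⟩ hub) (le_csSup ⟨_, hub⟩ h0)

lemma lowerSums_add {f : ℝ → ℝ} {a b c s t : ℝ}
    (hs : s ∈ lowerSums f a b) (ht : t ∈ lowerSums f b c) :
    s + t ∈ lowerSums f a c := by
  obtain ⟨n, x, p, hx0, hxn, hxm, hxp, rfl⟩ := hs
  obtain ⟨m, y, r, hy0, hym, hymo, hyr, rfl⟩ := ht
  have hxM := part_mono hxm
  refine ⟨n + m, fun i => if i < n then x i else y (i - n),
    fun i => if i < n then p i else r (i - n), ?_, ?_, ?_, ?_, ?_⟩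
  · by_cases h : 0 < n
    · simp [h, hx0]
    · have hn0 : n = 0 := by omega
      have : a = b := by rw [← hx0, ← hxn, hn0]
      simp [hn0, hy0, ← this]
  · have : ¬ (n + m < n) := by omega
    simp [this, hym]
  · intro i hi
    by_cases h1 : i < n
    · by_cases h2 : i + 1 < n
      · simp only [h1, h2, if_pos]; exact hxm i h1
      · have : i + 1 = n := by omega
        simp only [h1, if_pos, h2, if_neg, this]
        simpa [this] using (hxM i n h1.le le_rfl).trans_eq (by rw [hxn, ← hy0])
    · have h2 : ¬ (i + 1 < n) := by omega
      simp only [h1, h2, if_neg]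
      have : i + 1 - n = (i - n) + 1 := by omega
      rw [this]
      exact hymo (i - n) (by omega)
  · intro i hi
    by_cases h1 : i < n
    · by_cases h2 : i + 1 < n
      · simp only [h1, h2, if_pos]; exact hxp i h1
      · have he : i + 1 = n := by omega
        simp only [h1, if_pos, h2, if_neg]
        have : y (i + 1 - n) = x (i + 1) := by rw [he]; simp [hy0, ← hxn]
        rw [this]; exact hxp i h1
    · have h2 : ¬ (i + 1 < n) := by omega
      simp only [h1, h2, if_neg]
      have : i + 1 - n = (i - n) + 1 := by omega
      rw [this]
      exact hyr (i - n) (by omega)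
  · rw [Finset.sum_range_add]
    congr 1
    · apply Finset.sum_congr rfl
      intro i hi
      have h1 : i < n := Finset.mem_range.mp hi
      by_cases h2 : i + 1 < n
      · simp [h1, h2]
      · have he : i + 1 = n := by omega
        have : y (i + 1 - n) = x (i + 1) := by rw [he]; simp [hy0, ← hxn]
        simp [h1, h2, this]
        left; rw [he, hxn, hy0]
    · apply Finset.sum_congr rfl
      intro j hj
      have h1 : ¬ (n + j < n) := by omega
      have h2 : ¬ (n + j + 1 < n) := by omega
      have e1 : n + j - n = j := by omega
      have e2 : n + j + 1 - n = j + 1 := by omega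
      simp [h1, h2, e1, e2]

lemma lowerSums_split {f : ℝ → ℝ} {a b c : ℝ} (hab : a ≤ b) (hbc : b ≤ c) :
    ∀ s ∈ lowerSums f a c, ∃ u ∈ lowerSums f a b, ∃ v ∈ lowerSums f b c, s = u + v := by
  classical
  intro s hs
  rcases eq_or_lt_of_le hbc with rfl | hbc'
  · exact ⟨s, hs, 0, ⟨0, fun _ => b, fun _ => 0, rfl, rfl, by omega, by omega, by simp⟩,
      by ring⟩
  obtain ⟨n, x, p, hx0, hxn, hxm, hxp, rfl⟩ := hs
  have hxM := part_mono hxm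
  obtain ⟨k, hkn, hkb, hgt⟩ : ∃ k, k ≤ n ∧ x k ≤ b ∧ ∀ i, k < i → i ≤ n → b < x i := by
    refine ⟨Nat.findGreatest (fun i => x i ≤ b) n, Nat.findGreatest_le n, ?_, ?_⟩
    · exact Nat.findGreatest_spec (P := fun i => x i ≤ b) (Nat.zero_le n)
        (show x 0 ≤ b by rw [hx0]; exact hab)
    · intro i h1 h2
      exact lt_of_not_ge (Nat.findGreatest_is_greatest (P := fun i => x i ≤ b) h1 h2)
  have hkltn : k < n := by
    rcases eq_or_lt_of_le hkn with rfl | h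
    · exact absurd (hxn ▸ hkb) (not_le.mpr hbc')
    · exact h
  have hbk1 : b ≤ x (k + 1) := (hgt (k + 1) (Nat.lt_succ_self k) hkltn).le
  refine ⟨∑ i ∈ Finset.range k, p i * (x (i + 1) - x i) + p k * (b - x k),
    ⟨k + 1, fun i => if i ≤ k then x i else b, p, ?_, ?_, ?_, ?_, ?_⟩,
    p k * (x (k + 1) - b) + ∑ j ∈ Finset.range (n - (k + 1)), p (k + 1 + j) *
      (x (k + 1 + j + 1) - x (k + 1 + j)),
    ⟨n - k, fun j => if j = 0 then b else x (k + j), fun j => p (k + j), ?_,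
      ?_, ?_, ?_, ?_⟩, ?_⟩
  · beta_reduce; rw [if_pos (Nat.zero_le k)]; exact hx0
  · beta_reduce; rw [if_neg (by omega : ¬ k + 1 ≤ k)]
  · -- monotone left
    intro i hi
    have h1 : i ≤ k := by omega
    beta_reduce; rw [if_pos h1]
    by_cases h2 : i + 1 ≤ k
    · beta_reduce; rw [if_pos h2]; exact hxm i (by omega)
    · beta_reduce; rw [if_neg h2]
      have : i = k := by omega
      rw [this]; exact hkb
  · -- bounds left
    intro i hi
    have h1 : i ≤ k := by omega
    beta_reduce; rw [if_pos h1]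
    by_cases h2 : i + 1 ≤ k
    · beta_reduce; rw [if_pos h2]; exact hxp i (by omega)
    · beta_reduce; rw [if_neg h2]
      have he : i = k := by omega
      subst he
      intro t ht
      exact hxp i (by omega) t ⟨ht.1, ht.2.trans hbk1⟩
  · -- left sum
    rw [Finset.sum_range_succ]
    congr 1
    · apply Finset.sum_congr rfl
      intro i hi
      have hik := Finset.mem_range.mp hi
      beta_reduce; rw [if_pos (by omega : i ≤ k), if_pos (by omega : i + 1 ≤ k)]
    · beta_reduce; rw [if_pos (le_refl k), if_neg (by omega : ¬ k + 1 ≤ k)]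
  · beta_reduce; rw [if_pos rfl]
  · -- right endpoint
    beta_reduce; rw [if_neg (by omega : ¬ n - k = 0), show k + (n - k) = n by omega, hxn]
  · -- monotone right
    intro j hj
    by_cases h0 : j = 0
    · subst h0
      beta_reduce; rw [if_pos rfl, if_neg (by omega : ¬ (0:ℕ) + 1 = 0)]
      simpa using hbk1
    · beta_reduce; rw [if_neg h0, if_neg (by omega : ¬ j + 1 = 0),
        show k + (j + 1) = (k + j) + 1 by omega]
      exact hxm (k + j) (by omega)
  · -- bounds right
    intro j hj
    by_cases h0 : j = 0
    · subst h0
      beta_reduce; rw [if_pos rfl, if_neg (by omega : ¬ (0:ℕ) + 1 = 0)]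
      intro t ht
      refine hxp k (by omega) t ⟨hkb.trans ht.1, ?_⟩
      simpa using ht.2
    · beta_reduce; rw [if_neg h0, if_neg (by omega : ¬ j + 1 = 0),
        show k + (j + 1) = (k + j) + 1 by omega]
      exact hxp (k + j) (by omega)
  · -- right sum
    rw [show n - k = 1 + (n - (k + 1)) by omega, Finset.sum_range_add]
    congr 1
    · simp
    · apply Finset.sum_congr rfl
      intro j hj
      beta_reduce; rw [if_neg (by omega : ¬ 1 + j = 0), if_neg (by omega : ¬ 1 + j + 1 = 0),
        show k + (1 + j) = k + 1 + j by omega, show k + (1 + j + 1) = k + 1 + j + 1 by omega]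
  · -- total
    rw [show n = (k + 1) + (n - (k + 1)) by omega, Finset.sum_range_add,
      Finset.sum_range_succ]
    rw [show k + 1 + (n - (k + 1)) - (k + 1) = n - (k + 1) by omega]
    ring

lemma lowerDarboux_add {f : ℝ → ℝ} {a b c p q : ℝ} (hab : a ≤ b) (hbc : b ≤ c)
    (hp : ∀ t ∈ Icc a c, p ≤ f t) (hq : ∀ t ∈ Icc a c, f t ≤ q) :
    lowerDarboux f a c = lowerDarboux f a b + lowerDarboux f b c := by
  have hac : a ≤ c := hab.trans hbc
  have hsub1 : Icc a b ⊆ Icc a c := Icc_subset_Icc le_rfl hbc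
  have hsub2 : Icc b c ⊆ Icc a c := Icc_subset_Icc hab le_rfl
  have hp1 : ∀ t ∈ Icc a b, p ≤ f t := fun t ht => hp t (hsub1 ht)
  have hq1 : ∀ t ∈ Icc a b, f t ≤ q := fun t ht => hq t (hsub1 ht)
  have hp2 : ∀ t ∈ Icc b c, p ≤ f t := fun t ht => hp t (hsub2 ht)
  have hq2 : ∀ t ∈ Icc b c, f t ≤ q := fun t ht => hq t (hsub2 ht)
  have hne1 : (lowerSums f a b).Nonempty := ⟨_, const_mem_lowerSums hab hp1⟩
  have hne2 : (lowerSums f b c).Nonempty := ⟨_, const_mem_lowerSums hbc hp2⟩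
  have hne : (lowerSums f a c).Nonempty := ⟨_, const_mem_lowerSums hac hp⟩
  have hbd1 : BddAbove (lowerSums f a b) := ⟨_, fun s hs => lowerSums_le hq1 s hs⟩
  have hbd2 : BddAbove (lowerSums f b c) := ⟨_, fun s hs => lowerSums_le hq2 s hs⟩
  have hbd : BddAbove (lowerSums f a c) := ⟨_, fun s hs => lowerSums_le hq s hs⟩
  have hldC : lowerDarboux f a c = sSup (lowerSums f a c) := rfl
  apply le_antisymm
  · apply csSup_le hne
    intro s hs
    obtain ⟨u, hu, v, hv, rfl⟩ := lowerSums_split hab hbc s hs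
    exact add_le_add (le_csSup hbd1 hu) (le_csSup hbd2 hv)
  · have h1 : ∀ s ∈ lowerSums f a b, s + lowerDarboux f b c ≤ lowerDarboux f a c := by
      intro s hs
      have : lowerDarboux f b c ≤ lowerDarboux f a c - s :=
        csSup_le hne2 (fun t ht => by
          have := le_csSup hbd (lowerSums_add hs ht); linarith)
      linarith
    have h2 : lowerDarboux f a b ≤ lowerDarboux f a c - lowerDarboux f b c :=
      csSup_le hne1 (fun s hs => by linarith [h1 s hs])
    linarith

lemma upperDarboux_eq_neg (f : ℝ → ℝ) (a b : ℝ) :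
    upperDarboux f a b = -lowerDarboux (fun t => -f t) a b := by
  have hset : upperSums f a b = -(lowerSums (fun t => -f t) a b) := by
    ext s
    simp only [Set.mem_neg]
    constructor
    · rintro ⟨n, x, q, h0, hn, hm, hq, rfl⟩
      exact ⟨n, x, fun i => -q i, h0, hn, hm,
        fun i hi t ht => neg_le_neg (hq i hi t ht),
        by rw [← Finset.sum_neg_distrib]; apply Finset.sum_congr rfl; intros; ring⟩
    · rintro ⟨n, x, q, h0, hn, hm, hq, hsum⟩
      refine ⟨n, x, fun i => -q i, h0, hn, hm,
        fun i hi t ht => by simpa using neg_le_neg (hq i hi t ht), ?_⟩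
      have : s = -(-s) := by ring
      rw [this, hsum, ← Finset.sum_neg_distrib]
      apply Finset.sum_congr rfl; intros; ring
  rw [upperDarboux, lowerDarboux, hset, Real.sInf_def, neg_neg]

lemma neg_boundedOnCompacts {J : Set ℝ} {f : ℝ → ℝ} (hbd : BoundedOnCompacts J f) :
    BoundedOnCompacts J (fun t => -f t) := by
  intro a ha b hb
  obtain ⟨p, q, hpq⟩ := hbd a ha b hb
  exact ⟨-q, -p, fun t ht => ⟨neg_le_neg (hpq t ht).2, neg_le_neg (hpq t ht).1⟩⟩

/-- `F` built from the lower Darboux integral is a pre-primitive. -/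
lemma preprim_lower {J : Set ℝ} {f : ℝ → ℝ} (hbd : BoundedOnCompacts J f)
    {a : ℝ} (ha : a ∈ J) :
    PrePrimitive J f (fun t => if a ≤ t then lowerDarboux f a t else -lowerDarboux f t a) := by
  set F : ℝ → ℝ := fun t => if a ≤ t then lowerDarboux f a t else -lowerDarboux f t a with hF
  have key : ∀ x ∈ J, ∀ y ∈ J, x < y → ∀ p q : ℝ,
      (∀ t ∈ Icc x y, p ≤ f t ∧ f t ≤ q) →
      p * (y - x) ≤ F y - F x ∧ F y - F x ≤ q * (y - x) := by
    intro x hx y hy hxy p q hpq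
    have hp : ∀ t ∈ Icc x y, p ≤ f t := fun t ht => (hpq t ht).1
    have hq : ∀ t ∈ Icc x y, f t ≤ q := fun t ht => (hpq t ht).2
    by_cases hax : a ≤ x
    · have hay : a ≤ y := hax.trans hxy.le
      obtain ⟨P, Q, hPQ⟩ := hbd a ha y hy
      have hadd : lowerDarboux f a y = lowerDarboux f a x + lowerDarboux f x y :=
        lowerDarboux_add hax hxy.le (fun t ht => (hPQ t ht).1) (fun t ht => (hPQ t ht).2)
      have hb := lowerDarboux_bounds hxy.le hp hq
      have : F y - F x = lowerDarboux f x y := by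
        simp only [hF, hax, hay, if_pos]; linarith
      rw [this]; exact hb
    · push_neg at hax
      by_cases hay : a ≤ y
      · -- x < a ≤ y
        have hsub1 : Icc a y ⊆ Icc x y := Icc_subset_Icc hax.le le_rfl
        have hsub2 : Icc x a ⊆ Icc x y := Icc_subset_Icc le_rfl hay
        have hb1 := lowerDarboux_bounds hay (fun t ht => hp t (hsub1 ht))
          (fun t ht => hq t (hsub1 ht))
        have hb2 := lowerDarboux_bounds hax.le (fun t ht => hp t (hsub2 ht))
          (fun t ht => hq t (hsub2 ht))
        have : F y - F x = lowerDarboux f a y + lowerDarboux f x a := by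
          simp only [hF, hay, if_pos, if_neg (not_le.mpr hax)]; ring
        rw [this]
        constructor <;> [nlinarith [hb1.1, hb2.1]; nlinarith [hb1.2, hb2.2]]
      · push_neg at hay
        obtain ⟨P, Q, hPQ⟩ := hbd x hx a ha
        have hadd : lowerDarboux f x a = lowerDarboux f x y + lowerDarboux f y a :=
          lowerDarboux_add hxy.le hay.le (fun t ht => (hPQ t ht).1) (fun t ht => (hPQ t ht).2)
        have hb := lowerDarboux_bounds hxy.le hp hq
        have : F y - F x = lowerDarboux f x y := by
          simp only [hF, if_neg (not_le.mpr hax), if_neg (not_le.mpr hay)]; linarith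
        rw [this]; exact hb
  intro x hx y hy hne p q hpq
  rcases lt_or_gt_of_ne hne with hxy | hxy
  · have huIcc : uIcc x y = Icc x y := uIcc_of_le hxy.le
    rw [huIcc] at hpq
    obtain ⟨h1, h2⟩ := key x hx y hy hxy p q hpq
    have hd : (0 : ℝ) < y - x := by linarith
    constructor
    · rw [le_div_iff₀ hd]; linarith
    · rw [div_le_iff₀ hd]; linarith
  · have huIcc : uIcc x y = Icc y x := uIcc_of_ge hxy.le
    rw [huIcc] at hpq
    obtain ⟨h1, h2⟩ := key y hy x hx hxy p q hpq
    have hd : (0 : ℝ) < x - y := by linarith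
    have he : (F y - F x) / (y - x) = (F x - F y) / (x - y) := by
      rw [← neg_div_neg_eq]; ring_nf
    rw [he]
    constructor
    · rw [le_div_iff₀ hd]; linarith
    · rw [div_le_iff₀ hd]; linarith

lemma preprim_neg {J : Set ℝ} {f H : ℝ → ℝ} (hH : PrePrimitive J (fun t => -f t) H) :
    PrePrimitive J f (fun t => -H t) := by
  intro x hx y hy hne p q hpq
  have := hH x hx y hy hne (-q) (-p)
    (fun t ht => ⟨neg_le_neg (hpq t ht).2, neg_le_neg (hpq t ht).1⟩)
  have he : (-H y - -H x) / (y - x) = -((H y - H x) / (y - x)) := by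
    rw [← neg_div]; ring_nf
  rw [he]
  constructor <;> linarith [this.1, this.2]

theorem stmt10 (J : Set ℝ) (hJ : J.OrdConnected) (f : ℝ → ℝ)
    (hbd : BoundedOnCompacts J f)
    (h : ∀ F G : ℝ → ℝ, PrePrimitive J f F → PrePrimitive J f G →
      ∃ C : ℝ, ∀ x ∈ J, F x - G x = C) :
    DarbouxIntegrableOnCompacts J f := by
  intro a ha b hb hab
  set F : ℝ → ℝ := fun t => if a ≤ t then lowerDarboux f a t else -lowerDarboux f t a with hF
  set H : ℝ → ℝ := fun t => if a ≤ t then lowerDarboux (fun s => -f s) a t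
    else -lowerDarboux (fun s => -f s) t a with hH
  have hFp : PrePrimitive J f F := preprim_lower hbd ha
  have hGp : PrePrimitive J f (fun t => -H t) :=
    preprim_neg (preprim_lower (neg_boundedOnCompacts hbd) ha)
  obtain ⟨C, hC⟩ := h F (fun t => -H t) hFp hGp
  have hCa := hC a ha
  have hCb := hC b hb
  have hFa : F a = 0 := by simp [hF, lowerDarboux_self]
  have hHa : H a = 0 := by simp [hH, lowerDarboux_self]
  have hFb : F b = lowerDarboux f a b := by simp [hF, hab.le]
  have hHb : H b = lowerDarboux (fun s => -f s) a b := by simp [hH, hab.le]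
  have : lowerDarboux f a b = -lowerDarboux (fun s => -f s) a b := by
    rw [hFa, hHa] at hCa
    rw [hFb, hHb] at hCb
    simp at hCa
    linarith
  rw [this, ← upperDarboux_eq_neg]
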